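/- Let (R, m) be a commutative noetherian local ring and M an excellent R-module, i.e. I•M = γ_I(M) for every ideal I of R. Then: (a) for every ideal a of R the descending chain M ⊇ a•M ⊇ a^2•M ⊇ ... is eventually stationary, i.e. there exists n ≥ 1 with a^n•M = a^{n+1}•M; (b) for every r ∈ R there exists e ≥ 1 such that { x ∈ M : r^e•x = 0 } + r•M = M. -/

import Mathlib

open Submodule

section Aux

variable {R : Type u} [CommRing R] {M : Type v} [AddCommGroup M] [Module R M]

/-- Key consequence of excellence: if `x` is annihilated by the annihilator of `r`,
then `x ∈ rM`. -/
lemma excellent_div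
    (hM : ∀ I : Ideal R, I • (⊤ : Submodule R M) = ⨆ f : I →ₗ[R] M, LinearMap.range f)
    (r : R) (x : M) (hx : ∀ t : R, t * r = 0 → t • x = 0) : ∃ y : M, r • y = x := by
  classical
  set I : Ideal R := Ideal.span {r} with hI
  set φ : R →ₗ[R] R := LinearMap.toSpanSingleton R R r with hφ
  set ψ : R →ₗ[R] M := LinearMap.toSpanSingleton R M x with hψ
  have hker : LinearMap.ker φ ≤ LinearMap.ker ψ := by
    intro t ht
    simp only [LinearMap.mem_ker, hφ, hψ, LinearMap.toSpanSingleton_apply, smul_eq_mul] at ht ⊢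
    exact hx t ht
  have hrange : (I : Submodule R R) = LinearMap.range φ := by
    rw [hI, hφ, ← LinearMap.span_singleton_eq_range]
  set f : I →ₗ[R] M :=
    ((LinearMap.ker φ).liftQ ψ hker).comp
      ((φ.quotKerEquivRange.symm.toLinearMap).comp
        (LinearEquiv.ofEq (I : Submodule R R) (LinearMap.range φ) hrange).toLinearMap)
    with hf
  set z : I := ⟨r, Ideal.subset_span rfl⟩ with hz
  have hm1 : φ 1 ∈ LinearMap.range φ := LinearMap.mem_range_self φ 1
  have h1 : (LinearEquiv.ofEq (I : Submodule R R) (LinearMap.range φ) hrange) z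
      = ⟨φ 1, hm1⟩ := by
    apply Subtype.ext
    show r = φ 1
    simp [hφ]
  have h2 : φ.quotKerEquivRange.symm ⟨φ 1, hm1⟩ = Submodule.Quotient.mk 1 :=
    φ.quotKerEquivRange_symm_apply_image 1 hm1
  have hfz : f z = x := by
    show ((LinearMap.ker φ).liftQ ψ hker)
      (φ.quotKerEquivRange.symm
        ((LinearEquiv.ofEq (I : Submodule R R) (LinearMap.range φ) hrange) z)) = x
    rw [h1, h2, Submodule.liftQ_apply]
    simp [hψ]
  have hmem : x ∈ I • (⊤ : Submodule R M) := by
    rw [hM I]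
    exact Submodule.mem_iSup_of_mem f ⟨z, hfz⟩
  -- now extract divisibility
  refine Submodule.smul_induction_on hmem ?_ ?_
  · intro t ht n _
    obtain ⟨u, rfl⟩ := Ideal.mem_span_singleton'.mp ht
    exact ⟨u • n, by rw [smul_smul, mul_comm]⟩
  · rintro a b ⟨ya, hya⟩ ⟨yb, hyb⟩
    exact ⟨ya + yb, by rw [smul_add, hya, hyb]⟩

/-- Stabilization of the chain of annihilators of powers of `r`. -/
lemma ann_chain [IsNoetherianRing R] (r : R) :
    ∃ e : ℕ, 1 ≤ e ∧ ∀ j t, e ≤ j → t * r ^ j = 0 → t * r ^ e = 0 := by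
  set c : ℕ →o Submodule R R :=
    ⟨fun n => LinearMap.ker (LinearMap.lsmul R R (r ^ n)), by
      intro n m hnm t ht
      simp only [LinearMap.mem_ker, LinearMap.lsmul_apply, smul_eq_mul] at ht ⊢
      obtain ⟨d, rfl⟩ := le_iff_exists_add.mp hnm
      rw [pow_add, mul_comm (r ^ n) (r ^ d), mul_assoc, ht, mul_zero]⟩ with hc
  obtain ⟨e₀, he₀⟩ := monotone_stabilizes_iff_noetherian.mpr
    (inferInstance : IsNoetherian R R) c
  refine ⟨max e₀ 1, le_max_right _ _, fun j t hj ht => ?_⟩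
  have h1 : t ∈ c j := by
    simp only [hc, OrderHom.coe_mk, LinearMap.mem_ker, LinearMap.lsmul_apply, smul_eq_mul]
    change LinearMap.lsmul R R (r ^ j) t = 0
    rw [LinearMap.lsmul_apply, smul_eq_mul, mul_comm]; exact ht
  have h2 : t ∈ c (max e₀ 1) := by
    rw [← he₀ _ (le_max_left e₀ 1), he₀ j (le_trans (le_max_left e₀ 1) hj)]
    exact h1
  simp only [hc, OrderHom.coe_mk, LinearMap.mem_ker, LinearMap.lsmul_apply, smul_eq_mul] at h2
  rw [mul_comm]; exact h2

/-- For an excellent module the chain `r^k M` stabilizes. -/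
lemma pow_span_smul_stab [IsNoetherianRing R]
    (hM : ∀ I : Ideal R, I • (⊤ : Submodule R M) = ⨆ f : I →ₗ[R] M, LinearMap.range f)
    (r : R) :
    ∃ e : ℕ, 1 ≤ e ∧ ∀ k, e ≤ k →
      (Ideal.span {r}) ^ k • (⊤ : Submodule R M)
        = (Ideal.span {r}) ^ (k + 1) • (⊤ : Submodule R M) := by
  obtain ⟨e, he1, hstab⟩ := ann_chain (R := R) r
  refine ⟨e, he1, fun k hk => ?_⟩
  apply le_antisymm
  · rw [Ideal.span_singleton_pow, Ideal.span_singleton_pow]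
    refine Submodule.smul_le.mpr ?_
    intro t ht n _
    obtain ⟨u, rfl⟩ := Ideal.mem_span_singleton'.mp ht
    have key : ∃ y, r ^ (k + 1) • y = r ^ k • n := by
      apply excellent_div hM
      intro s hs
      have h1 : s * r ^ e = 0 := hstab (k + 1) s (le_trans hk (Nat.le_succ k)) hs
      have h2 : s * r ^ k = 0 := by
        obtain ⟨d, rfl⟩ := le_iff_exists_add.mp hk
        rw [pow_add, ← mul_assoc, h1, zero_mul]
      rw [smul_smul, h2, zero_smul]
    obtain ⟨y, hy⟩ := key
    have heq : (u * r ^ k) • n = r ^ (k + 1) • (u • y) := by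
      calc (u * r ^ k) • n = u • (r ^ k • n) := by rw [mul_smul]
        _ = u • (r ^ (k + 1) • y) := by rw [← hy]
        _ = r ^ (k + 1) • (u • y) := by rw [smul_smul, smul_smul, mul_comm]
    rw [heq]
    exact Submodule.smul_mem_smul (Ideal.subset_span rfl) trivial
  · exact Submodule.smul_mono_left (Ideal.pow_le_pow_right (Nat.le_succ k))

lemma sum_smul_le {ι : Type*} {s : Finset ι} {I : ι → Ideal R} {T : Submodule R M}
    (h : ∀ k ∈ s, I k • (⊤ : Submodule R M) ≤ T) :
    (∑ k ∈ s, I k) • (⊤ : Submodule R M) ≤ T := by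
  classical
  induction s using Finset.induction_on with
  | empty =>
      rw [Finset.sum_empty, Ideal.zero_eq_bot, Submodule.bot_smul]
      exact bot_le
  | @insert a s ha ih =>
      rw [Finset.sum_insert ha, Submodule.add_eq_sup, Submodule.sup_smul]
      exact sup_le (h a (Finset.mem_insert_self a s))
        (ih fun k hk => h k (Finset.mem_insert_of_mem hk))

lemma main_a [IsNoetherianRing R]
    (hM : ∀ I : Ideal R, I • (⊤ : Submodule R M) = ⨆ f : I →ₗ[R] M, LinearMap.range f)
    (S : Finset R) :
    ∃ n : ℕ, 1 ≤ n ∧ ∀ N, n ≤ N →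
      (Ideal.span (S : Set R)) ^ N • (⊤ : Submodule R M)
        = (Ideal.span (S : Set R)) ^ (N + 1) • (⊤ : Submodule R M) := by
  classical
  induction S using Finset.induction_on with
  | empty =>
      refine ⟨1, le_rfl, fun N hN => ?_⟩
      rw [Finset.coe_empty, Ideal.span_empty, ← Ideal.zero_eq_bot,
        zero_pow (by omega : N ≠ 0), zero_pow (by omega : N + 1 ≠ 0)]
  | @insert r S hrS ih =>
      obtain ⟨nb, hnb, hb⟩ := ih
      obtain ⟨e, he, hcstab⟩ := pow_span_smul_stab hM r
      refine ⟨nb + e, by omega, fun N hN => ?_⟩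
      have hsp : Ideal.span (↑(insert r S) : Set R)
          = Ideal.span {r} + Ideal.span (S : Set R) := by
        rw [Finset.coe_insert, Submodule.add_eq_sup]
        exact Submodule.span_insert r (S : Set R)
      set c : Ideal R := Ideal.span {r} with hc
      set b : Ideal R := Ideal.span (S : Set R) with hbdef
      set a' : Ideal R := c + b with ha'
      have hca : c ≤ a' := by rw [ha', Submodule.add_eq_sup]; exact le_sup_left
      have hba : b ≤ a' := by rw [ha', Submodule.add_eq_sup]; exact le_sup_right
      rw [hsp]
      apply le_antisymm
      · have hbin : a' ^ N
            = ∑ k ∈ Finset.range (N + 1), c ^ k * b ^ (N - k) * (N.choose k : Ideal R) :=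
          add_pow c b N
        show a' ^ N • (⊤ : Submodule R M) ≤ a' ^ (N + 1) • ⊤
        rw [hbin]
        apply sum_smul_le
        intro k hk
        have hkN : k ≤ N := Nat.lt_succ_iff.mp (Finset.mem_range.mp hk)
        have step1 : (c ^ k * b ^ (N - k) * (N.choose k : Ideal R)) • (⊤ : Submodule R M)
            ≤ (c ^ k * b ^ (N - k)) • ⊤ := Submodule.smul_mono_left Ideal.mul_le_left
        refine le_trans step1 ?_
        by_cases hke : e ≤ k
        · have h1 : (c ^ k * b ^ (N - k)) • (⊤ : Submodule R M)
              = b ^ (N - k) • (c ^ k • (⊤ : Submodule R M)) := by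
            rw [mul_comm, mul_smul]
          rw [h1, hcstab k hke, ← mul_smul]
          apply Submodule.smul_mono_left
          calc b ^ (N - k) * c ^ (k + 1)
              ≤ a' ^ (N - k) * a' ^ (k + 1) :=
                Ideal.mul_mono (Ideal.pow_right_mono hba _) (Ideal.pow_right_mono hca _)
            _ = a' ^ (N + 1) := by rw [← pow_add]; congr 1; omega
        · have h1 : (c ^ k * b ^ (N - k)) • (⊤ : Submodule R M)
              = c ^ k • (b ^ (N - k) • (⊤ : Submodule R M)) := mul_smul _ _ _
          rw [h1, hb (N - k) (by omega), ← mul_smul]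
          apply Submodule.smul_mono_left
          calc c ^ k * b ^ (N - k + 1)
              ≤ a' ^ k * a' ^ (N - k + 1) :=
                Ideal.mul_mono (Ideal.pow_right_mono hca _) (Ideal.pow_right_mono hba _)
            _ = a' ^ (N + 1) := by rw [← pow_add]; congr 1; omega
      · exact Submodule.smul_mono_left (Ideal.pow_le_pow_right (Nat.le_succ N))

end Aux

/-- Satz 1.11 (a), (b): Let `M` be an excellent `R`-module, i.e. `I•M = γ_I(M)` for every
ideal `I`. Then (a) for every ideal `a` the descending chain `M ⊇ aM ⊇ a²M ⊇ ⋯` is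
stationary; (b) for every `r ∈ R` there is `e ≥ 1` with `M[r^e] + rM = M`. -/
theorem excellent_chain_and_decomposition
    {R : Type u} [CommRing R] [IsNoetherianRing R] [IsLocalRing R]
    (M : Type v) [AddCommGroup M] [Module R M]
    (hM : ∀ I : Ideal R, I • (⊤ : Submodule R M) = ⨆ f : I →ₗ[R] M, LinearMap.range f) :
    (∀ a : Ideal R, ∃ n : ℕ, 1 ≤ n ∧
      a ^ n • (⊤ : Submodule R M) = a ^ (n + 1) • (⊤ : Submodule R M)) ∧
    (∀ r : R, ∃ e : ℕ, 1 ≤ e ∧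
      Submodule.torsionBy R M (r ^ e) ⊔
        LinearMap.range (LinearMap.lsmul R M r) = (⊤ : Submodule R M)) := by
  constructor
  · intro a
    obtain ⟨S, hS⟩ : a.FG := IsNoetherian.noetherian a
    obtain ⟨n, hn1, hn⟩ := main_a hM S
    refine ⟨n, hn1, ?_⟩
    have hspan : Ideal.span (S : Set R) = a := hS
    rw [← hspan]
    exact hn n le_rfl
  · intro r
    obtain ⟨e, he1, hstab⟩ := ann_chain (R := R) r
    refine ⟨e, he1, ?_⟩
    rw [eq_top_iff]
    intro x _
    have hkey : ∃ y, r ^ (2 * e) • y = r ^ e • x := by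
      apply excellent_div hM
      intro t ht
      have h1 : t * r ^ e = 0 := hstab (2 * e) t (by omega) ht
      rw [smul_smul, h1, zero_smul]
    obtain ⟨y, hy⟩ := hkey
    rw [Submodule.mem_sup]
    refine ⟨x - r ^ e • y, ?_, r ^ e • y, ?_, by abel⟩
    · rw [Submodule.mem_torsionBy_iff, smul_sub, smul_smul, ← pow_add,
        (by ring : e + e = 2 * e), hy, sub_self]
    · refine ⟨r ^ (e - 1) • y, ?_⟩
      rw [LinearMap.lsmul_apply, smul_smul, ← pow_succ', show e - 1 + 1 = e by omega]
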